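/- Let u be a nonzero lightlike vector in L^{n+1} with u₀ > 0, v₀ a unit vector in R^m, y₀ ∈ R^m and a ∈ R. The function F(x,y) = ⟨x,u⟩_L · exp(a⟨y - y₀, v₀⟩) on H^n × R^m satisfies ΔF = (n + a²)F, hence F is an isoparametric function all of whose level sets are regular. -/

import Mathlib

open RealInnerProductSpace

/-- The Lorentz inner product on L^{n+1}. -/
noncomputable def lorentzInner {n : ℕ} (x y : EuclideanSpace ℝ (Fin (n + 1))) : ℝ :=
  -(x 0 * y 0) + ∑ i : Fin n, x i.succ * y i.succ

lemma lI_smul_add {n : ℕ} (c d : ℝ) (x v u : EuclideanSpace ℝ (Fin (n+1))) :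
    lorentzInner (c • x + d • v) u = c * lorentzInner x u + d * lorentzInner v u := by
  simp only [lorentzInner, PiLp.add_apply, PiLp.smul_apply, smul_eq_mul]
  have h1 : (∑ i : Fin n, (c * x i.succ + d * v i.succ) * u i.succ)
      = c * ∑ i : Fin n, x i.succ * u i.succ + d * ∑ i : Fin n, v i.succ * u i.succ := by
    rw [Finset.mul_sum, Finset.mul_sum, ← Finset.sum_add_distrib]
    exact Finset.sum_congr rfl fun i _ => by ring
  rw [h1]; ring

lemma lI_smul_smul {n : ℕ} (c : ℝ) (x : EuclideanSpace ℝ (Fin (n+1))) :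
    lorentzInner (c • x) (c • x) = c ^ 2 * lorentzInner x x := by
  simp only [lorentzInner, PiLp.smul_apply, smul_eq_mul]
  have h1 : (∑ i : Fin n, c * x i.succ * (c * x i.succ))
      = c ^ 2 * ∑ i : Fin n, x i.succ * x i.succ := by
    rw [Finset.mul_sum]
    exact Finset.sum_congr rfl fun i _ => by ring
  rw [h1]; ring

lemma iter2_hyp (A B C : ℝ) :
    iteratedDeriv 2 (fun t : ℝ => (Real.cosh t * A + Real.sinh t * B) * C) 0 = A * C := by
  have hd : deriv (fun t : ℝ => (Real.cosh t * A + Real.sinh t * B) * C)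
      = fun t => (Real.sinh t * A + Real.cosh t * B) * C := by
    funext t
    exact ((((Real.hasDerivAt_cosh t).mul_const A).add
      ((Real.hasDerivAt_sinh t).mul_const B)).mul_const C).deriv
  rw [show (2:ℕ) = 1 + 1 from rfl, iteratedDeriv_succ, iteratedDeriv_one, hd]
  have := ((((Real.hasDerivAt_sinh (0:ℝ)).mul_const A).add
      ((Real.hasDerivAt_cosh (0:ℝ)).mul_const B)).mul_const C).deriv
  refine this.trans ?_
  simp

lemma iter2_exp (K a c d : ℝ) :
    iteratedDeriv 2 (fun t : ℝ => K * Real.exp (a * (c + t * d))) 0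
      = K * (a * d) ^ 2 * Real.exp (a * c) := by
  have key : ∀ t : ℝ, HasDerivAt (fun t : ℝ => a * (c + t * d)) (a * d) t := by
    intro t
    simpa using (((hasDerivAt_id t).mul_const d).const_add c).const_mul a
  have hd : deriv (fun t : ℝ => K * Real.exp (a * (c + t * d)))
      = fun t => K * (a * d) * Real.exp (a * (c + t * d)) := by
    funext t
    have := (((key t).exp).const_mul K).deriv
    rw [this]; ring
  rw [show (2:ℕ) = 1 + 1 from rfl, iteratedDeriv_succ, iteratedDeriv_one, hd]
  have := (((key 0).exp).const_mul (K * (a * d))).deriv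
  rw [this]
  ring_nf

lemma sum_sq_eq_one {m : ℕ} (v₀ : EuclideanSpace ℝ (Fin m)) (hv₀ : ‖v₀‖ = 1) :
    ∑ j : Fin m, (v₀ j) ^ 2 = 1 := by
  have h : ⟪v₀, v₀⟫ = ∑ j : Fin m, v₀ j * v₀ j := by
    simp only [PiLp.inner_apply, RCLike.inner_apply, conj_trivial]
  rw [real_inner_self_eq_norm_sq, hv₀] at h
  simp only [pow_two]
  rw [← h]; simp

lemma inner_shift {m : ℕ} (y y₀ v₀ : EuclideanSpace ℝ (Fin m)) (t : ℝ) (j : Fin m) :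
    ⟪y + t • EuclideanSpace.single j 1 - y₀, v₀⟫ = ⟪y - y₀, v₀⟫ + t * v₀ j := by
  have h : y + t • EuclideanSpace.single j 1 - y₀
      = (y - y₀) + t • EuclideanSpace.single j 1 := by abel
  rw [h, inner_add_left, inner_smul_left]
  simp [EuclideanSpace.inner_single_left]

/- STATEMENT 3: F(x,y) = ⟨x,u⟩_L exp(a⟨y-y₀,v₀⟩) on H^n × ℝ^m satisfies ΔF = (n+a²)F,
hence F is isoparametric (‖∇F‖² = (1+a²)F² by Statement 2) and all of its level sets
are regular (the gradient never vanishes).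
The Laplace–Beltrami operator of the product metric is computed as the sum of second
derivatives of F along the geodesics of H^n × ℝ^m issuing from (x,y) with velocities
forming an orthonormal frame: the geodesics of the hyperboloid H^n are
t ↦ cosh t • x + sinh t • v for Lorentz-unit tangent vectors v (⟨v,v⟩_L = 1, ⟨v,x⟩_L = 0),
and those of ℝ^m are straight lines. -/
theorem stmt3 (n m : ℕ) (a : ℝ)
    (u : EuclideanSpace ℝ (Fin (n + 1)))
    (hu_light : lorentzInner u u = 0) (hu_ne : u ≠ 0) (hu0 : 0 < u 0)
    (v₀ : EuclideanSpace ℝ (Fin m)) (hv₀ : ‖v₀‖ = 1)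
    (y₀ : EuclideanSpace ℝ (Fin m))
    (F : EuclideanSpace ℝ (Fin (n + 1)) → EuclideanSpace ℝ (Fin m) → ℝ)
    (hF : ∀ x y, F x y = lorentzInner x u * Real.exp (a * ⟪y - y₀, v₀⟫)) :
    (∀ x, lorentzInner x x = -1 → 0 < x 0 → ∀ y,
      ∀ vH : Fin n → EuclideanSpace ℝ (Fin (n + 1)),
        (∀ i j, lorentzInner (vH i) (vH j) = if i = j then 1 else 0) →
        (∀ i, lorentzInner (vH i) x = 0) →
        (∑ i : Fin n,
            iteratedDeriv 2 (fun t : ℝ => F (Real.cosh t • x + Real.sinh t • vH i) y) 0)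
          + (∑ j : Fin m,
              iteratedDeriv 2 (fun t : ℝ => F x (y + t • EuclideanSpace.single j 1)) 0)
          = ((n : ℝ) + a ^ 2) * F x y) ∧
    (∀ x, lorentzInner x x = -1 → 0 < x 0 → ∀ y,
      ¬(Real.exp (a * ⟪y - y₀, v₀⟫) • (u + lorentzInner x u • x) = 0 ∧
        (a * lorentzInner x u * Real.exp (a * ⟪y - y₀, v₀⟫)) • v₀
          = (0 : EuclideanSpace ℝ (Fin m)))) := by
  constructor
  · intro x hx hx0 y vH hvH hvHx
    set A := lorentzInner x u with hA
    set C := Real.exp (a * ⟪y - y₀, v₀⟫) with hC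
    have hsum1 : ∀ i : Fin n,
        iteratedDeriv 2 (fun t : ℝ => F (Real.cosh t • x + Real.sinh t • vH i) y) 0
          = F x y := by
      intro i
      have heq : (fun t : ℝ => F (Real.cosh t • x + Real.sinh t • vH i) y)
          = fun t : ℝ => (Real.cosh t * A + Real.sinh t * lorentzInner (vH i) u) * C := by
        funext t
        rw [hF, lI_smul_add]
      rw [heq, iter2_hyp, hF]
    have hsum2 : ∀ j : Fin m,
        iteratedDeriv 2 (fun t : ℝ => F x (y + t • EuclideanSpace.single j 1)) 0
          = a ^ 2 * (v₀ j) ^ 2 * F x y := by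
      intro j
      have heq : (fun t : ℝ => F x (y + t • EuclideanSpace.single j 1))
          = fun t : ℝ => A * Real.exp (a * (⟪y - y₀, v₀⟫ + t * v₀ j)) := by
        funext t
        rw [hF, inner_shift]
      rw [heq, iter2_exp, hF]
      ring
    rw [Finset.sum_congr rfl fun i _ => hsum1 i, Finset.sum_congr rfl fun j _ => hsum2 j,
      Finset.sum_const]
    have h2 : (∑ j : Fin m, a ^ 2 * v₀ j ^ 2 * F x y) = a ^ 2 * F x y := by
      rw [← Finset.sum_mul, ← Finset.mul_sum, sum_sq_eq_one v₀ hv₀, mul_one]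
    rw [h2]
    simp only [Finset.card_univ, Fintype.card_fin, nsmul_eq_mul]
    ring
  · intro x hx hx0 y ⟨h1, _⟩
    rw [smul_eq_zero] at h1
    rcases h1 with h1 | h1
    · exact Real.exp_ne_zero _ h1
    · set c := lorentzInner x u with hcdef
      have hu_eq : u = (-c) • x :=
        (eq_neg_of_add_eq_zero_left h1).trans (neg_smul c x).symm
      have h0 : (0 : ℝ) = (-c) ^ 2 * lorentzInner x x := by
        rw [← lI_smul_smul, ← hu_eq, hu_light]
      rw [hx] at h0
      have hc : c = 0 := by nlinarith [sq_nonneg c]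
      apply hu_ne
      rw [hu_eq, hc]
      simp
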